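/- Let (T^α, ħ) be a unital matrix regularization, let f ∈ C^∞(Σ) be nowhere vanishing, and suppose {f̂_α} converges to f. If each f̂_α is invertible and ‖f̂_α^{-1}‖ is uniformly bounded in α, then {f̂_α^{-1}} converges to 1/f. -/

import Mathlib

open MeasureTheory Filter Matrix Real
open scoped Topology Matrix.Norms.L2Operator

noncomputable section

/-- A matrix regularization of a compact surface `S` with symplectic volume measure `μ`
and Poisson bracket `pb`. -/
structure MatrixRegularization (S : Type*) [TopologicalSpace S] [CompactSpace S]
    [MeasurableSpace S] (μ : Measure S)
    (pb : C(S, ℝ) → C(S, ℝ) → C(S, ℝ)) where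
  Ndim : ℕ → ℕ
  Ndim_pos : ∀ α, 0 < Ndim α
  Ndim_mono : StrictMono Ndim
  T : ∀ α : ℕ, C(S, ℝ) →ₗ[ℝ] Matrix (Fin (Ndim α)) (Fin (Ndim α)) ℂ
  T_isHermitian : ∀ α f, (T α f).IsHermitian
  hbar : ℕ → ℝ
  hbar_pos : ∀ N, 0 < hbar N
  hbar_decr : ∀ m n : ℕ, m ≤ n → hbar n ≤ hbar m
  hbar_bdd : ∃ c : ℝ, Tendsto (fun N : ℕ => (N : ℝ) * hbar N) atTop (𝓝 c)
  norm_lim : ∀ f, ∃ L : ℝ, Tendsto (fun α => ‖T α f‖) atTop (𝓝 L)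
  mul_approx : ∀ f h, Tendsto (fun α => ‖T α (f * h) - T α f * T α h‖) atTop (𝓝 0)
  comm_approx : ∀ f h, Tendsto (fun α =>
      ‖((Complex.I * (hbar (Ndim α) : ℂ))⁻¹) • ⁅T α f, T α h⁆ - T α (pb f h)‖) atTop (𝓝 0)
  trace_approx : ∀ f, Tendsto (fun α => (2 * (π : ℂ) * (hbar (Ndim α) : ℂ)) * (T α f).trace)
      atTop (𝓝 ((∫ x, f x ∂μ : ℝ) : ℂ))

namespace MatrixRegularization

variable {S : Type*} [TopologicalSpace S] [CompactSpace S] [MeasurableSpace S]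
  {μ : Measure S} {pb : C(S, ℝ) → C(S, ℝ) → C(S, ℝ)}

/-- A sequence of matrices converges to the function `f`. -/
def Converges (R : MatrixRegularization S μ pb)
    (fhat : ∀ α : ℕ, Matrix (Fin (R.Ndim α)) (Fin (R.Ndim α)) ℂ) (f : C(S, ℝ)) : Prop :=
  Tendsto (fun α => ‖fhat α - R.T α f‖) atTop (𝓝 0)

/-- A unital matrix regularization. -/
def Unital (R : MatrixRegularization S μ pb) : Prop :=
  Tendsto (fun α => ‖(1 : Matrix (Fin (R.Ndim α)) (Fin (R.Ndim α)) ℂ) - R.T α 1‖) atTop (𝓝 0)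

end MatrixRegularization

/-- inverses of a converging sequence converge to `1/f`. -/
theorem inverse_converges {S : Type*} [TopologicalSpace S] [CompactSpace S]
    [MeasurableSpace S] {μ : Measure S} [IsFiniteMeasure μ]
    {pb : C(S, ℝ) → C(S, ℝ) → C(S, ℝ)}
    (R : MatrixRegularization S μ pb) (hU : R.Unital)
    (f g : C(S, ℝ)) (hf : ∀ x, f x ≠ 0) (hg : ∀ x, f x * g x = 1)
    (fhat : ∀ α : ℕ, Matrix (Fin (R.Ndim α)) (Fin (R.Ndim α)) ℂ)
    (hconv : R.Converges fhat f)
    (hinv : ∀ α, IsUnit (fhat α))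
    (hbdd : ∃ C : ℝ, ∀ α, ‖(fhat α)⁻¹‖ ≤ C) :
    R.Converges (fun α => (fhat α)⁻¹) g := by
  obtain ⟨C, hC⟩ := hbdd
  obtain ⟨L, hL⟩ := R.norm_lim g
  have hfg : f * g = 1 := ContinuousMap.ext hg
  have hC0 : 0 ≤ C := (norm_nonneg _).trans (hC 0)
  have key : ∀ α, ‖(fhat α)⁻¹ - R.T α g‖ ≤
      C * (‖(1 : Matrix (Fin (R.Ndim α)) (Fin (R.Ndim α)) ℂ) - R.T α 1‖
        + ‖R.T α (f * g) - R.T α f * R.T α g‖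
        + ‖fhat α - R.T α f‖ * ‖R.T α g‖) := by
    intro α
    have hmul : (fhat α)⁻¹ * fhat α = 1 :=
      Matrix.nonsing_inv_mul _ ((Matrix.isUnit_iff_isUnit_det _).mp (hinv α))
    have h1 : (fhat α)⁻¹ - R.T α g = (fhat α)⁻¹ * (1 - fhat α * R.T α g) := by
      rw [mul_sub, mul_one, ← mul_assoc, hmul, one_mul]
    have h2 : (1 : Matrix (Fin (R.Ndim α)) (Fin (R.Ndim α)) ℂ) - fhat α * R.T α g
        = ((1 - R.T α 1) + (R.T α (f * g) - R.T α f * R.T α g))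
          - (fhat α - R.T α f) * R.T α g := by
      rw [hfg]; noncomm_ring
    calc ‖(fhat α)⁻¹ - R.T α g‖
        ≤ ‖(fhat α)⁻¹‖ * ‖(1 : Matrix (Fin (R.Ndim α)) (Fin (R.Ndim α)) ℂ)
            - fhat α * R.T α g‖ := by rw [h1]; exact norm_mul_le _ _
      _ ≤ C * (‖(1 : Matrix (Fin (R.Ndim α)) (Fin (R.Ndim α)) ℂ) - R.T α 1‖
            + ‖R.T α (f * g) - R.T α f * R.T α g‖
            + ‖fhat α - R.T α f‖ * ‖R.T α g‖) := by
          apply mul_le_mul (hC α) _ (norm_nonneg _) hC0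
          rw [h2]
          exact (norm_sub_le _ _).trans
            (add_le_add (norm_add_le _ _) (norm_mul_le _ _))
  have h0 : Tendsto (fun α => C * (‖(1 : Matrix (Fin (R.Ndim α)) (Fin (R.Ndim α)) ℂ)
        - R.T α 1‖ + ‖R.T α (f * g) - R.T α f * R.T α g‖
        + ‖fhat α - R.T α f‖ * ‖R.T α g‖)) atTop (𝓝 (C * (0 + 0 + 0 * L))) :=
    tendsto_const_nhds.mul ((hU.add (R.mul_approx f g)).add (hconv.mul hL))
  simp only [add_zero, zero_mul, mul_zero, zero_add] at h0
  exact squeeze_zero (fun α => norm_nonneg _) key h0
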